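/- Let n ≥ 1, c > 0, and z ∈ ℝⁿ with Σᵢ max(0, zᵢ) > c. Then there exists a threshold a > 0 with Σᵢ max(0, zᵢ − a) = c, and the vector x* with components x*ᵢ = zᵢ if zᵢ ≤ 0 and x*ᵢ = max(0, zᵢ − a) if zᵢ > 0 is the unique minimizer of ‖x − z‖ over the set C = {x ∈ ℝⁿ : Σᵢ max(0, xᵢ) ≤ c}; i.e. the projection onto the one-sided ℓ₁ ball is computed by soft-thresholding the positive part of z while leaving nonpositive components unchanged. -/

import Mathlib

/-- Per-coordinate variational inequality for the soft-thresholding projection. -/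
lemma stmt_17_key_coord (a zi y : ℝ) (ha : 0 < a) :
    (y - (if zi ≤ 0 then zi else max 0 (zi - a))) * (zi - (if zi ≤ 0 then zi else max 0 (zi - a)))
      ≤ a * (max 0 y - max 0 (zi - a)) := by
  rcases le_or_gt zi 0 with h | h
  · rw [if_pos h]
    have h1 : max 0 (zi - a) = 0 := max_eq_left (by linarith)
    have h2 : 0 ≤ max 0 y := le_max_left _ _
    rw [h1]
    nlinarith
  · rw [if_neg (not_le.mpr h)]
    have hy : y ≤ max 0 y := le_max_right _ _
    have hy0 : 0 ≤ max 0 y := le_max_left _ _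
    rcases le_or_gt zi a with hza | hza
    · have h1 : max 0 (zi - a) = 0 := max_eq_left (by linarith)
      rw [h1]
      nlinarith
    · have h1 : max 0 (zi - a) = zi - a := max_eq_right (by linarith)
      rw [h1]
      nlinarith

/-- Existence of the positive threshold with `∑ max 0 (z i - a) = c`. -/
lemma stmt_17_exists_a {n : ℕ} (c : ℝ) (hc : 0 < c) (z : Fin n → ℝ)
    (hz : c < ∑ i, max 0 (z i)) :
    ∃ a : ℝ, 0 < a ∧ (∑ i, max 0 (z i - a)) = c := by
  set S := ∑ i, max 0 (z i) with hS
  have hS0 : 0 < S := lt_trans hc hz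
  have hcont : Continuous (fun a : ℝ => ∑ i, max 0 (z i - a)) := by
    apply continuous_finset_sum
    intro i _
    exact continuous_const.max (continuous_const.sub continuous_id)
  have hfS : (∑ i, max 0 (z i - S)) = 0 := by
    apply Finset.sum_eq_zero
    intro i _
    have hzi : z i ≤ S := by
      calc z i ≤ max 0 (z i) := le_max_right _ _
        _ ≤ S := Finset.single_le_sum (f := fun j => max 0 (z j))
              (fun j _ => le_max_left _ _) (Finset.mem_univ i)
    exact max_eq_left (by linarith)
  have hmem : c ∈ Set.Icc ((fun a : ℝ => ∑ i, max 0 (z i - a)) S)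
      ((fun a : ℝ => ∑ i, max 0 (z i - a)) 0) := by
    simp only [hfS]
    constructor
    · exact le_of_lt hc
    · simp only [sub_zero]; exact le_of_lt hz
  obtain ⟨a, haI, hfa⟩ := intermediate_value_Icc' (le_of_lt hS0) hcont.continuousOn hmem
  refine ⟨a, ?_, hfa⟩
  rcases lt_or_eq_of_le haI.1 with h | h
  · exact h
  · exfalso
    rw [← h] at hfa
    simp only [sub_zero] at hfa
    linarith

/-- Projection onto the asymmetric (one-sided) ℓ₁ ball `C = {x : Σᵢ max(0, xᵢ) ≤ c}` when
`Σᵢ max(0, zᵢ) > c`: there is a threshold `a > 0` with `Σᵢ max(0, zᵢ − a) = c`, and the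
vector obtained by soft-thresholding the positive components of `z` (leaving nonpositive
components unchanged) is the unique closest point of `C` to `z`. -/
theorem stmt_17 {n : ℕ} (hn : 1 ≤ n) (c : ℝ) (hc : 0 < c)
    (z : EuclideanSpace ℝ (Fin n)) (hz : c < ∑ i, max 0 (z i)) :
    ∃ a : ℝ, 0 < a ∧ (∑ i, max 0 (z i - a)) = c ∧
      (∑ i, max 0 ((show EuclideanSpace ℝ (Fin n) from
          WithLp.toLp 2 fun i => if z i ≤ 0 then z i else max 0 (z i - a)) i)) ≤ c ∧
      ∀ y : EuclideanSpace ℝ (Fin n), (∑ i, max 0 (y i)) ≤ c →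
        y ≠ (show EuclideanSpace ℝ (Fin n) from
          WithLp.toLp 2 fun i => if z i ≤ 0 then z i else max 0 (z i - a)) →
        ‖(show EuclideanSpace ℝ (Fin n) from
          WithLp.toLp 2 fun i => if z i ≤ 0 then z i else max 0 (z i - a)) - z‖ < ‖y - z‖ := by
  obtain ⟨a, ha, hfa⟩ := stmt_17_exists_a c hc z.ofLp hz
  set x : EuclideanSpace ℝ (Fin n) :=
    WithLp.toLp 2 fun i => if z i ≤ 0 then z i else max 0 (z i - a) with hxdef
  have hxi : ∀ i, x i = if z i ≤ 0 then z i else max 0 (z i - a) := fun i => rfl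
  refine ⟨a, ha, hfa, ?_, ?_⟩
  · -- feasibility: ∑ max 0 (x i) = c
    have : (∑ i, max 0 (x i)) = ∑ i, max 0 (z i - a) := by
      apply Finset.sum_congr rfl
      intro i _
      rw [hxi i]
      rcases le_or_gt (z i) 0 with h | h
      · rw [if_pos h, max_eq_left h, max_eq_left (by linarith)]
      · rw [if_neg (not_le.mpr h), max_eq_right (le_max_left _ _)]
    rw [this, hfa]
  · intro y hy hne
    -- the cross term is nonpositive
    have hT : (∑ i, (y i - x i) * (z i - x i)) ≤ 0 := by
      have h1 : (∑ i, (y i - x i) * (z i - x i))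
          ≤ ∑ i, a * (max 0 (y i) - max 0 (z i - a)) := by
        apply Finset.sum_le_sum
        intro i _
        rw [hxi i]
        exact stmt_17_key_coord a (z i) (y i) ha
      have h2 : (∑ i, a * (max 0 (y i) - max 0 (z i - a)))
          = a * ((∑ i, max 0 (y i)) - c) := by
        rw [← Finset.mul_sum, Finset.sum_sub_distrib, hfa]
      have h3 : a * ((∑ i, max 0 (y i)) - c) ≤ 0 := by
        apply mul_nonpos_of_nonneg_of_nonpos (le_of_lt ha)
        linarith
      linarith [h1, h2.le, h2.ge]
    have hpos : 0 < ∑ i, (y i - x i) ^ 2 := by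
      have hex : ∃ i, y i ≠ x i := by
        by_contra h
        push_neg at h
        exact hne (PiLp.ext h)
      obtain ⟨i, hi⟩ := hex
      apply Finset.sum_pos' (fun j _ => sq_nonneg _) ⟨i, Finset.mem_univ i, ?_⟩
      have : y i - x i ≠ 0 := sub_ne_zero.mpr hi
      positivity
    have hsum : (∑ i, (x i - z i) ^ 2) < ∑ i, (y i - z i) ^ 2 := by
      have hid : (∑ i, (y i - z i) ^ 2)
          = (∑ i, (y i - x i) ^ 2) + (∑ i, (x i - z i) ^ 2)
            - 2 * ∑ i, (y i - x i) * (z i - x i) := by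
        rw [Finset.mul_sum, ← Finset.sum_add_distrib, ← Finset.sum_sub_distrib]
        apply Finset.sum_congr rfl
        intro i _
        ring
      linarith
    rw [EuclideanSpace.norm_eq, EuclideanSpace.norm_eq]
    apply Real.sqrt_lt_sqrt (Finset.sum_nonneg fun i _ => sq_nonneg _)
    simpa [Real.norm_eq_abs, sq_abs] using hsum
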